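/- (Wiener's theorem for measures) Let σ be a finite positive Borel measure on the circle 𝕋 = ℝ/ℤ with Fourier coefficients c(n) = ∫ e(nt) dσ(t). Then lim_{N→∞} (1/N) Σ_{n=1}^{N} |c(n)|² = Σ_{t ∈ 𝕋} σ({t})², and in particular σ has no atoms if and only if (1/N) Σ_{n=1}^{N} |c(n)|² → 0. -/

import Mathlib

open Finset Filter MeasureTheory Complex

theorem stmt10 [Fact ((0 : ℝ) < 1)] (σ : Measure (AddCircle (1 : ℝ))) [IsFiniteMeasure σ]
    (c : ℤ → ℂ) (hc : ∀ n : ℤ, c n = ∫ x, fourier n x ∂σ) :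
    Tendsto (fun N : ℕ =>
        (1 / (N : ℝ)) * ∑ n ∈ Finset.Icc (1 : ℕ) N, ‖c n‖ ^ 2)
      atTop (nhds (∑' t : AddCircle (1 : ℝ), (σ {t}).toReal ^ 2)) ∧
    ((∀ t : AddCircle (1 : ℝ), σ {t} = 0) ↔
      Tendsto (fun N : ℕ =>
          (1 / (N : ℝ)) * ∑ n ∈ Finset.Icc (1 : ℕ) N, ‖c n‖ ^ 2)
        atTop (nhds 0)) := by
  set π : Measure (AddCircle (1:ℝ) × AddCircle (1:ℝ)) := σ.prod σ with hπ
  set g : ℕ → AddCircle (1:ℝ) × AddCircle (1:ℝ) → ℂ :=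
    fun N p => (N:ℂ)⁻¹ * ∑ n ∈ Finset.Icc (1:ℕ) N, fourier (n:ℤ) (p.1 - p.2) with hg
  have hnorm1 : ∀ (n : ℤ) (x : AddCircle (1:ℝ)), ‖(fourier n x : ℂ)‖ = 1 := by
    intro n x
    rw [fourier_apply]
    exact Circle.norm_coe _
  -- fourier splits over subtraction
  have hsub : ∀ (n : ℤ) (x y : AddCircle (1:ℝ)),
      fourier n (x - y) = fourier n x * fourier (-n) y := by
    intro n x y
    rw [fourier_apply, fourier_apply, fourier_apply, sub_eq_add_neg, smul_add,
      AddCircle.toCircle_add, Circle.coe_mul, smul_neg, ← neg_smul]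
  -- the key integral identity
  have hkey : ∀ n : ℤ, ∫ p, (fourier n (p.1 - p.2) : ℂ) ∂π = c n * (starRingEnd ℂ) (c n) := by
    intro n
    have h1 : ∫ p, (fourier n (p.1 - p.2) : ℂ) ∂π
        = (∫ x, (fourier n x : ℂ) ∂σ) * ∫ y, (fourier (-n) y : ℂ) ∂σ := by
      rw [← integral_prod_mul]
      exact integral_congr_ae (Filter.Eventually.of_forall fun p => hsub n p.1 p.2)
    rw [h1]
    congr 1
    · exact (hc n).symm
    · rw [hc n, ← integral_conj]
      exact integral_congr_ae (Filter.Eventually.of_forall fun x => fourier_neg)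
  -- continuity and boundedness of g N
  have hgcont : ∀ N, Continuous (g N) := by
    intro N
    exact continuous_const.mul (continuous_finset_sum _ fun n _ =>
      (fourier (n:ℤ)).continuous.comp (continuous_fst.sub continuous_snd))
  have hgbd : ∀ N p, ‖g N p‖ ≤ 1 := by
    intro N p
    rcases Nat.eq_zero_or_pos N with h | h
    · simp [hg, h]
    · calc ‖g N p‖ ≤ ‖(N:ℂ)⁻¹‖ * ∑ n ∈ Finset.Icc (1:ℕ) N, ‖(fourier (n:ℤ) (p.1-p.2) : ℂ)‖ := by
            rw [hg]; simp only [norm_mul]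
            gcongr
            exact norm_sum_le _ _
        _ = (N:ℝ)⁻¹ * (N:ℝ) := by
            simp [hnorm1, Circle.norm_coe]
        _ = 1 := by
            rw [inv_mul_cancel₀]
            exact_mod_cast h.ne'
  have hgint : ∀ N, Integrable (g N) π := by
    intro N
    exact (integrable_const (1:ℝ)).mono' ((hgcont N).aestronglyMeasurable)
      (Filter.Eventually.of_forall fun p => hgbd N p)
  -- identity: the averages are integrals of re (g N)
  have hident : ∀ N : ℕ, (1/(N:ℝ)) * ∑ n ∈ Finset.Icc (1:ℕ) N, ‖c n‖ ^ 2
      = ∫ p, (g N p).re ∂π := by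
    intro N
    have h2 : ∫ p, (g N p).re ∂π = (∫ p, g N p ∂π).re := integral_re (hgint N)
    have h3 : ∫ p, g N p ∂π
        = (N:ℂ)⁻¹ * ∑ n ∈ Finset.Icc (1:ℕ) N, (c n * (starRingEnd ℂ) (c n)) := by
      rw [hg]
      simp only
      rw [integral_const_mul, integral_finset_sum]
      · congr 1
        exact Finset.sum_congr rfl fun n _ => hkey (n:ℤ)
      · intro n _
        exact (Integrable.mono' (integrable_const (1:ℝ))
          (((fourier (n:ℤ)).continuous.comp
            (continuous_fst.sub continuous_snd)).aestronglyMeasurable)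
          (Filter.Eventually.of_forall fun p => (hnorm1 _ _).le))
    have h4 : ∑ n ∈ Finset.Icc (1:ℕ) N, (c n * (starRingEnd ℂ) (c n))
        = ((∑ n ∈ Finset.Icc (1:ℕ) N, ‖c n‖ ^ 2 : ℝ) : ℂ) := by
      rw [Complex.ofReal_sum]
      refine Finset.sum_congr rfl fun n _ => ?_
      rw [Complex.mul_conj]
      norm_cast
      exact (Complex.sq_norm _).symm
    rw [h2, h3, h4]
    rw [show ((N:ℕ):ℂ) = (((N:ℝ)):ℂ) from by push_cast; ring, ← Complex.ofReal_inv,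
      ← Complex.ofReal_mul, Complex.ofReal_re, one_div]
  -- pointwise limit
  set f : AddCircle (1:ℝ) × AddCircle (1:ℝ) → ℝ :=
    Set.indicator (Set.diagonal (AddCircle (1:ℝ))) (fun _ => (1:ℝ)) with hf
  have hlim : ∀ p, Tendsto (fun N => (g N p).re) atTop (nhds (f p)) := by
    intro p
    rcases eq_or_ne p.1 p.2 with h | h
    · have hfp : f p = 1 := by
        rw [hf, Set.indicator_of_mem]; exact h
      rw [hfp]
      apply Tendsto.congr' (f₁ := fun _ => (1:ℝ))
      · filter_upwards [eventually_ge_atTop 1] with N hN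
        have h0 : p.1 - p.2 = 0 := sub_eq_zero.mpr h
        have hN0 : (N:ℂ) ≠ 0 := by exact_mod_cast Nat.one_le_iff_ne_zero.mp hN
        rw [hg]
        simp only [h0, fourier_eval_zero, Finset.sum_const, Nat.card_Icc, Nat.add_sub_cancel,
          nsmul_eq_mul, mul_one, inv_mul_cancel₀ hN0, Complex.one_re]
      · exact tendsto_const_nhds
    · have hfp : f p = 0 := by
        rw [hf, Set.indicator_of_notMem]; exact h
      rw [hfp]
      set u := p.1 - p.2 with hu
      have hune : u ≠ 0 := sub_ne_zero.mpr h
      set z : ℂ := (fourier 1 u : ℂ) with hz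
      have hz1 : z ≠ 1 := by
        intro hcon
        apply hune
        have hcirc : AddCircle.toCircle u = AddCircle.toCircle (0 : AddCircle (1:ℝ)) := by
          apply Circle.coe_injective
          rw [← fourier_one (x := u), ← hz, hcon]
          rw [show ((AddCircle.toCircle (0 : AddCircle (1:ℝ)) : ℂ)) = 1 from by
            rw [← fourier_one (x := (0 : AddCircle (1:ℝ)))]; exact fourier_eval_zero 1]
        exact AddCircle.injective_toCircle one_ne_zero hcirc
      have hznorm : ‖z‖ = 1 := hnorm1 1 u
      have hpow : ∀ n : ℕ, (fourier ((n:ℤ)) u : ℂ) = z ^ n := by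
        intro n
        induction n with
        | zero => simpa using (fourier_zero (x := u))
        | succ k ih =>
          have hcast : ((k+1 : ℕ) : ℤ) = (k:ℤ) + 1 := by push_cast; ring
          rw [hcast, fourier_add, ih, hz, pow_succ]
      set C : ℝ := 2 / ‖z - 1‖ with hC
      have hbd : ∀ N : ℕ, ‖∑ n ∈ Finset.Icc (1:ℕ) N, (fourier ((n:ℤ)) u : ℂ)‖ ≤ C := by
        intro N
        have h5 : ∑ n ∈ Finset.Icc (1:ℕ) N, (fourier ((n:ℤ)) u : ℂ)
            = (z ^ (N+1) - z ^ 1) / (z - 1) := by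
          rw [← Finset.Ico_add_one_right_eq_Icc, Finset.sum_congr rfl (fun n _ => hpow n)]
          exact geom_sum_Ico hz1 (Nat.le_add_left 1 N)
        have hd : 0 < ‖z - 1‖ := norm_pos_iff.mpr (sub_ne_zero.mpr hz1)
        rw [h5, hC, norm_div]
        gcongr
        calc ‖z ^ (N+1) - z ^ 1‖ ≤ ‖z ^ (N+1)‖ + ‖z ^ 1‖ := norm_sub_le _ _
          _ = 2 := by rw [norm_pow, norm_pow, hznorm]; norm_num
      have htend : Tendsto (fun N : ℕ => (N:ℝ)⁻¹ * C) atTop (nhds 0) := by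
        have h9 := (tendsto_inv_atTop_zero (𝕜 := ℝ)).comp
          (tendsto_natCast_atTop_atTop (R := ℝ))
        simpa using h9.mul_const C
      apply squeeze_zero_norm _ htend
      intro N
      calc ‖(g N p).re‖ ≤ ‖g N p‖ := Complex.abs_re_le_norm _
        _ ≤ (N:ℝ)⁻¹ * C := by
            rw [hg]
            simp only [norm_mul, norm_inv, Complex.norm_natCast]
            gcongr
            rw [← hu]
            exact hbd N
  -- dominated convergence
  have hdm : MeasurableSet (Set.diagonal (AddCircle (1:ℝ))) := isClosed_diagonal.measurableSet
  have hDCT : Tendsto (fun N => ∫ p, (g N p).re ∂π) atTop (nhds (∫ p, f p ∂π)) := by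
    refine tendsto_integral_of_dominated_convergence (fun _ => (1:ℝ))
      (fun N => (Complex.continuous_re.comp (hgcont N)).aestronglyMeasurable)
      (integrable_const 1)
      (fun N => Filter.Eventually.of_forall fun p =>
        (Complex.abs_re_le_norm _).trans (hgbd N p))
      (Filter.Eventually.of_forall hlim)
  have hfint : ∫ p, f p ∂π = (π (Set.diagonal (AddCircle (1:ℝ)))).toReal := by
    rw [hf, integral_indicator_const (1:ℝ) hdm]
    simp
    rfl
  -- the measure of the diagonal
  have hD : {t : AddCircle (1:ℝ) | σ {t} ≠ 0}.Countable := by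
    have h := Measure.countable_meas_level_set_pos (μ := σ)
      (g := fun a : AddCircle (1:ℝ) => a) measurable_id
    simpa [Set.setOf_eq_eq_singleton, pos_iff_ne_zero] using h
  have hdiag : π (Set.diagonal (AddCircle (1:ℝ))) = ∑' t, σ {t} * σ {t} := by
    rw [hπ, Measure.prod_apply hdm]
    have hpre : ∀ x : AddCircle (1:ℝ),
        Prod.mk x ⁻¹' (Set.diagonal (AddCircle (1:ℝ))) = {x} := by
      intro x; ext y
      simp [Set.mem_diagonal_iff, eq_comm]
    simp_rw [hpre]
    have hind : (fun x : AddCircle (1:ℝ) => σ {x})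
        = Set.indicator {t : AddCircle (1:ℝ) | σ {t} ≠ 0} (fun x => σ {x}) := by
      funext x
      by_cases hx : x ∈ {t : AddCircle (1:ℝ) | σ {t} ≠ 0}
      · exact (Set.indicator_of_mem hx (fun x : AddCircle (1:ℝ) => σ {x})).symm
      · rw [Set.indicator_of_notMem hx]
        simpa using hx
    calc ∫⁻ x, σ {x} ∂σ = ∫⁻ x in {t : AddCircle (1:ℝ) | σ {t} ≠ 0}, σ {x} ∂σ := by
          rw [← lintegral_indicator hD.measurableSet, ← hind]
      _ = ∑' a : {t : AddCircle (1:ℝ) | σ {t} ≠ 0}, σ {(a : AddCircle (1:ℝ))} * σ {(a : AddCircle (1:ℝ))} :=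
          lintegral_countable _ hD
      _ = ∑' t, σ {t} * σ {t} := by
          rw [_root_.tsum_subtype {t : AddCircle (1:ℝ) | σ {t} ≠ 0} (fun t => σ {t} * σ {t})]
          refine tsum_congr fun t => ?_
          by_cases ht : t ∈ {t : AddCircle (1:ℝ) | σ {t} ≠ 0}
          · exact Set.indicator_of_mem ht (fun t : AddCircle (1:ℝ) => σ {t} * σ {t})
          · rw [Set.indicator_of_notMem ht]
            have ht' : σ {t} = 0 := by simpa using ht
            rw [ht', mul_zero]
  -- finiteness
  have hsle : ∑' t : AddCircle (1:ℝ), σ {t} ≤ σ Set.univ := by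
    rw [ENNReal.tsum_eq_iSup_sum]
    refine iSup_le fun s => ?_
    have hs : ∑ t ∈ s, σ {t} = σ ↑s := by
      rw [← measure_biUnion_finset ?_ fun _ _ => measurableSet_singleton _]
      · congr 1
        ext x
        simp
      · intro a _ b _ hab
        exact Set.disjoint_singleton.mpr hab
    rw [hs]
    exact measure_mono (Set.subset_univ _)
  have hfin : ∑' t : AddCircle (1:ℝ), σ {t} * σ {t} ≠ ⊤ := by
    have hle : ∑' t : AddCircle (1:ℝ), σ {t} * σ {t} ≤ σ Set.univ * σ Set.univ :=
      calc ∑' t : AddCircle (1:ℝ), σ {t} * σ {t}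
          ≤ ∑' t : AddCircle (1:ℝ), σ Set.univ * σ {t} :=
            ENNReal.tsum_le_tsum fun t => mul_le_mul_left (measure_mono (Set.subset_univ _)) _
        _ = σ Set.univ * ∑' t : AddCircle (1:ℝ), σ {t} := ENNReal.tsum_mul_left
        _ ≤ σ Set.univ * σ Set.univ := mul_le_mul_right hsle _
    exact (hle.trans_lt (ENNReal.mul_lt_top (measure_lt_top σ _) (measure_lt_top σ _))).ne
  have hLtoReal : (π (Set.diagonal (AddCircle (1:ℝ)))).toReal
      = ∑' t : AddCircle (1:ℝ), (σ {t}).toReal ^ 2 := by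
    rw [hdiag, ENNReal.tsum_toReal_eq
      (fun t => ENNReal.mul_ne_top (measure_ne_top σ _) (measure_ne_top σ _))]
    exact tsum_congr fun t => by rw [ENNReal.toReal_mul, sq]
  have hmain : Tendsto (fun N : ℕ =>
      (1 / (N : ℝ)) * ∑ n ∈ Finset.Icc (1 : ℕ) N, ‖c n‖ ^ 2)
      atTop (nhds (∑' t : AddCircle (1 : ℝ), (σ {t}).toReal ^ 2)) := by
    rw [hfint, hLtoReal] at hDCT
    exact hDCT.congr fun N => (hident N).symm
  refine ⟨hmain, ?_, ?_⟩
  · intro h0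
    have hz : (∑' t : AddCircle (1:ℝ), (σ {t}).toReal ^ 2) = 0 := by simp [h0]
    exact hz ▸ hmain
  · intro h0 t
    have hL : (∑' t : AddCircle (1:ℝ), (σ {t}).toReal ^ 2) = 0 := tendsto_nhds_unique hmain h0
    have hsummable : Summable (fun t : AddCircle (1:ℝ) => (σ {t}).toReal ^ 2) := by
      have h := ENNReal.summable_toReal hfin
      simpa [ENNReal.toReal_mul, sq] using h
    have h1 : (σ {t}).toReal ^ 2 ≤ 0 := hL ▸ Summable.le_tsum hsummable t fun j _ => sq_nonneg _
    have h2 : (σ {t}).toReal = 0 := by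
      have h3 := le_antisymm h1 (sq_nonneg _)
      exact (pow_eq_zero_iff two_ne_zero).mp h3
    exact ((ENNReal.toReal_eq_zero_iff _).mp h2).resolve_right (measure_ne_top σ _)
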